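/- Let A₀, A₁, A₂ be complex m×n matrices and Δ₀ = A₁⊗A₂ − A₂⊗A₁, Δ₁ = A₂⊗A₀ − A₀⊗A₂. If (μ₀Δ₁ − μ₁Δ₀)z = 0 for some nonzero z ∈ ℂ^{n²} and (μ₀,μ₁) ≠ (0,0), then there exist scalars λ₀, λ₁, λ₂ not all zero and a nonzero x ∈ ℂⁿ with (λ₀A₀ + λ₁A₁ + λ₂A₂)x = 0. -/

import Mathlib

open Matrix Kronecker

private lemma kron_mulVec' {m n : ℕ} (A B : Matrix (Fin m) (Fin n) ℂ)
    (z : Fin n × Fin n → ℂ) (p : Fin m × Fin m) :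
    (A ⊗ₖ B).mulVec z p = (A * (Matrix.of fun i j => z (i, j)) * Bᵀ) p.1 p.2 := by
  obtain ⟨i₁, i₂⟩ := p
  simp only [Matrix.mulVec, Matrix.mul_apply, dotProduct, Fintype.sum_prod_type,
    Matrix.kroneckerMap_apply, Matrix.transpose_apply, Matrix.of_apply,
    Finset.sum_mul, Finset.mul_sum]
  rw [Finset.sum_comm]
  apply Finset.sum_congr rfl
  intro j₁ _
  apply Finset.sum_congr rfl
  intro j₂ _
  ring

theorem stmt_5 {m n : ℕ} (A₀ A₁ A₂ : Matrix (Fin m) (Fin n) ℂ)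
    (μ₀ μ₁ : ℂ) (hμ : ¬(μ₀ = 0 ∧ μ₁ = 0))
    (z : Fin n × Fin n → ℂ) (hz : z ≠ 0)
    (h : (μ₀ • (A₂ ⊗ₖ A₀ - A₀ ⊗ₖ A₂) - μ₁ • (A₁ ⊗ₖ A₂ - A₂ ⊗ₖ A₁)).mulVec z = 0) :
    ∃ (l₀ l₁ l₂ : ℂ) (x : Fin n → ℂ), ¬(l₀ = 0 ∧ l₁ = 0 ∧ l₂ = 0) ∧ x ≠ 0 ∧
      (l₀ • A₀ + l₁ • A₁ + l₂ • A₂).mulVec x = 0 := by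
  classical
  set B : Matrix (Fin m) (Fin n) ℂ := μ₀ • A₀ + μ₁ • A₁ with hBdef
  set C : Matrix (Fin m) (Fin n) ℂ := A₂ with hCdef
  by_cases hker : ∃ x : Fin n → ℂ, x ≠ 0 ∧ B.mulVec x = 0
  · obtain ⟨x, hx0, hx⟩ := hker
    refine ⟨μ₀, μ₁, 0, x, by tauto, hx0, ?_⟩
    simpa [hBdef] using hx
  · push_neg at hker
    -- B has trivial kernel
    have hBinj : LinearMap.ker B.mulVecLin = ⊥ := by
      rw [Matrix.ker_mulVecLin_eq_bot_iff]
      intro v hv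
      by_contra h0
      exact hker v h0 hv
    obtain ⟨g, hg⟩ := LinearMap.exists_leftInverse_of_injective B.mulVecLin hBinj
    set P : Matrix (Fin n) (Fin m) ℂ := LinearMap.toMatrix' g with hPdef
    have hPB : P * B = 1 := by
      have h1 : LinearMap.toMatrix' (g.comp B.mulVecLin) = LinearMap.toMatrix' (LinearMap.id (R := ℂ) (M := Fin n → ℂ)) := by rw [hg]
      rwa [LinearMap.toMatrix'_comp, LinearMap.toMatrix'_id, ← Matrix.toLin'_apply',
        LinearMap.toMatrix'_toLin'] at h1
    -- rewrite h as a Sylvester-type matrix equation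
    set Zm : Matrix (Fin n) (Fin n) ℂ := Matrix.of (fun i j => z (i, j)) with hZmdef
    have hkr : (C ⊗ₖ B - B ⊗ₖ C).mulVec z = 0 := by
      have heq : μ₀ • (A₂ ⊗ₖ A₀ - A₀ ⊗ₖ A₂) - μ₁ • (A₁ ⊗ₖ A₂ - A₂ ⊗ₖ A₁)
          = C ⊗ₖ B - B ⊗ₖ C := by
        simp only [hBdef, hCdef, Matrix.add_kronecker, Matrix.kronecker_add,
          Matrix.smul_kronecker, Matrix.kronecker_smul, smul_sub]
        abel
      rw [← heq]; exact h
    have hmat : C * Zm * Bᵀ = B * Zm * Cᵀ := by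
      ext i₁ i₂
      have h0 := congrFun hkr (i₁, i₂)
      rw [Matrix.sub_mulVec] at h0
      have h1 := kron_mulVec' C B z (i₁, i₂)
      have h2 := kron_mulVec' B C z (i₁, i₂)
      simp only [Pi.sub_apply, Pi.zero_apply] at h0
      rw [h1, h2] at h0
      exact sub_eq_zero.mp h0
    -- the square matrix N
    set N : Matrix (Fin n) (Fin n) ℂ := (P * C)ᵀ with hNdef
    set W : Matrix (Fin n) (Fin n) ℂ := Zmᵀ with hWdef
    have h1 : (P * C) * Zm * Bᵀ = Zm * Cᵀ := by
      calc (P * C) * Zm * Bᵀ = P * (C * Zm * Bᵀ) := by rw [Matrix.mul_assoc, Matrix.mul_assoc, Matrix.mul_assoc]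
        _ = P * (B * (Zm * Cᵀ)) := by rw [hmat, Matrix.mul_assoc]
        _ = (P * B) * (Zm * Cᵀ) := by rw [Matrix.mul_assoc]
        _ = Zm * Cᵀ := by rw [hPB, Matrix.one_mul]
    have hstar : C * W = B * W * N := by
      have h2 := congrArg Matrix.transpose h1
      simp only [Matrix.transpose_mul, Matrix.transpose_transpose] at h2
      rw [hWdef, hNdef, Matrix.transpose_mul, ← h2, Matrix.mul_assoc]
    -- W ≠ 0
    have hW0 : W ≠ 0 := by
      intro hW
      apply hz
      funext p
      have := congrFun (congrFun hW p.2) p.1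
      simpa [hWdef, hZmdef] using this
    -- kernel of W is invariant under N
    set K : Submodule ℂ (Fin n → ℂ) := LinearMap.ker W.mulVecLin with hKdef
    have hKinv : K ≤ K.comap N.mulVecLin := by
      intro u hu
      simp only [hKdef, LinearMap.mem_ker, Matrix.mulVecLin_apply, Submodule.mem_comap] at hu ⊢
      have hB0 : B.mulVec (W.mulVec (N.mulVec u)) = 0 := by
        rw [Matrix.mulVec_mulVec, Matrix.mulVec_mulVec, ← hstar, ← Matrix.mulVec_mulVec,
          hu, Matrix.mulVec_zero]
      by_contra h0
      exact hker _ h0 hB0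
    have hKlt : K < ⊤ := by
      rcases lt_or_eq_of_le (le_top : K ≤ ⊤) with h | h
      · exact h
      · exfalso
        apply hW0
        ext i j
        have : W.mulVec (Pi.single j 1) = 0 := by
          have : Pi.single j 1 ∈ K := h ▸ Submodule.mem_top
          simpa [hKdef, Matrix.mulVecLin_apply] using this
        have := congrFun this i
        simpa [Matrix.mulVec_single] using this
    have : Nontrivial ((Fin n → ℂ) ⧸ K) := Submodule.Quotient.nontrivial_iff.mpr hKlt.ne
    obtain ⟨c, hc⟩ := Module.End.exists_eigenvalue (Submodule.mapQ K K N.mulVecLin hKinv)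
    obtain ⟨v, hv⟩ := hc.exists_hasEigenvector
    obtain ⟨u, rfl⟩ := Submodule.Quotient.mk_surjective K v
    have huK : u ∉ K := by
      intro huK
      exact hv.right ((Submodule.Quotient.mk_eq_zero K).mpr huK)
    have heig : Submodule.Quotient.mk (p := K) (N.mulVecLin u) = Submodule.Quotient.mk (c • u) := by
      have := hv.apply_eq_smul
      rw [Submodule.mapQ_apply] at this
      rw [this]
      rfl
    have hmem : N.mulVecLin u - c • u ∈ K := (Submodule.Quotient.eq K).mp heig
    have hWN : W.mulVec (N.mulVec u) = c • W.mulVec u := by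
      have : W.mulVecLin (N.mulVecLin u - c • u) = 0 := hmem
      rw [map_sub, LinearMap.map_smul, sub_eq_zero] at this
      simpa [Matrix.mulVecLin_apply] using this
    set x : Fin n → ℂ := W.mulVec u with hxdef
    have hx0 : x ≠ 0 := by
      intro hx
      exact huK (by simpa [hKdef, Matrix.mulVecLin_apply, hxdef] using hx)
    refine ⟨-(c * μ₀), -(c * μ₁), 1, x, by simp, hx0, ?_⟩
    have hCx : C.mulVec x = c • B.mulVec x := by
      rw [hxdef, Matrix.mulVec_mulVec, hstar, Matrix.mul_assoc, ← Matrix.mulVec_mulVec,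
        ← Matrix.mulVec_mulVec, hWN, Matrix.mulVec_smul]
    have hM : (-(c * μ₀)) • A₀ + (-(c * μ₁)) • A₁ + (1 : ℂ) • A₂ = C - c • B := by
      simp only [hBdef, hCdef, smul_add, smul_smul, one_smul, neg_smul]
      abel
    rw [hM, Matrix.sub_mulVec, hCx, Matrix.smul_mulVec, sub_self]
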